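/- Key convolution estimate for the Harish-Chandra function: Let Γ be a discrete group with length function |·| and a function φ : Γ → (0,1] with φ(e)=1, φ(γ^{-1})=φ(γ). Assume: (i) for some ρ > 1 and polynomial Q, φ(γ) ≤ Q(n)/|C_{n,ρ}| for γ ∈ C_{n,ρ} and n large; (ii) the uniform averaged bound: there is M with (1/|C_{n,ρ}|) Σ_{γ ∈ C_{n,ρ}} φ(gγ^{-1})/φ(γ) ≤ M φ(g) for all g ∈ Γ and n large. Then there exists t₀ > 0 such that for all t ≥ t₀ there is C_t with Σ_{γ ∈ Γ} φ(gγ^{-1}) φ(γ) / (1+|γ|)^t ≤ C_t φ(g) for all g ∈ Γ. -/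

import Mathlib

/-- key convolution estimate for the Harish-Chandra function:
given (i) `φ(γ) ≤ Q(n)/|C_{n,ρ}|` on annuli, (ii) the uniform averaged bound
`(1/|C_{n,ρ}|) Σ_{γ∈C_{n,ρ}} φ(gγ⁻¹)/φ(γ) ≤ M φ(g)`, and the finite-set bound
`φ(gγ⁻¹) ≤ C_γ φ(g)`, there exists `t₀ > 0` such that for all `t ≥ t₀` there is
`C_t` with `Σ_γ φ(gγ⁻¹)φ(γ)/(1+|γ|)^t ≤ C_t φ(g)` for all `g`. -/
theorem stmt16 {G : Type*} [Group G]
    -- length function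
    (ℓ : G → ℝ) (hℓ0 : ℓ 1 = 0) (hℓpos : ∀ γ, 0 ≤ ℓ γ)
    (hℓinv : ∀ γ, ℓ γ⁻¹ = ℓ γ) (hℓsub : ∀ γ g, ℓ (γ * g) ≤ ℓ γ + ℓ g)
    -- Harish-Chandra function `φ : Γ → (0,1]`, symmetric, `φ(e) = 1`
    (φ : G → ℝ) (hφpos : ∀ γ, 0 < φ γ) (hφle : ∀ γ, φ γ ≤ 1)
    (hφe : φ 1 = 1) (hφinv : ∀ γ, φ γ⁻¹ = φ γ)
    -- annuli `C_{n,ρ}` are finite, `ρ > 1`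
    (ρ : ℝ) (hρ : 1 < ρ)
    (Cn : ℕ → Finset G)
    (hCn : ∀ (n : ℕ) (γ : G), γ ∈ Cn n ↔ (n : ℝ) - ρ ≤ ℓ γ ∧ ℓ γ ≤ (n : ℝ) + ρ)
    (N₀ : ℕ)
    -- (i) upper bound of `φ` on annuli by a polynomial over the cardinality
    (Q : Polynomial ℝ)
    (hQ : ∀ n : ℕ, N₀ ≤ n → ∀ γ ∈ Cn n, φ γ ≤ Q.eval (n : ℝ) / ((Cn n).card : ℝ))
    -- (ii) uniform averaged bound
    (M : ℝ) (hM : 0 < M)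
    (hunif : ∀ n : ℕ, N₀ ≤ n → ∀ g : G,
      ((Cn n).card : ℝ)⁻¹ * ∑ γ ∈ Cn n, φ (g * γ⁻¹) / φ γ ≤ M * φ g)
    -- finite-set bound coming from positivity of the representation
    (hfin : ∀ γ : G, ∃ Cγ : ℝ, 0 < Cγ ∧ ∀ g : G, φ (g * γ⁻¹) ≤ Cγ * φ g) :
    ∃ t₀ > (0:ℝ), ∀ t : ℝ, t₀ ≤ t → ∃ Ct > (0:ℝ), ∀ g : G,
      Summable (fun γ : G => φ (g * γ⁻¹) * φ γ / (1 + ℓ γ) ^ t) ∧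
      ∑' γ : G, φ (g * γ⁻¹) * φ γ / (1 + ℓ γ) ^ t ≤ Ct * φ g := by
  classical
  set d := Q.natDegree with hd
  set K : ℝ := ∑ i ∈ Finset.range (d + 1), |Q.coeff i| with hKdef
  have hK0 : 0 ≤ K := Finset.sum_nonneg fun i _ => abs_nonneg _
  choose c hc1 hc2 using hfin
  refine ⟨(d : ℝ) + 2, by positivity, fun t ht => ?_⟩
  have ht0 : (0:ℝ) ≤ t := le_trans (by positivity) ht
  -- the dyadic-style pieces: each γ belongs to `Dn ⌊ℓ γ⌋₊`
  set Dn : ℕ → Finset G := fun n => (Cn n).filter (fun γ => ⌊ℓ γ⌋₊ = n) with hDn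
  have hmemD : ∀ γ : G, γ ∈ Dn ⌊ℓ γ⌋₊ := by
    intro γ
    have h0 := hℓpos γ
    have hfl : (⌊ℓ γ⌋₊ : ℝ) ≤ ℓ γ := Nat.floor_le h0
    have hfl2 : ℓ γ < (⌊ℓ γ⌋₊ : ℝ) + 1 := Nat.lt_floor_add_one _
    simp only [hDn, Finset.mem_filter, hCn]
    exact ⟨⟨by linarith, by linarith⟩, trivial⟩
  -- summable majorant for the large annuli
  set b : ℕ → ℝ := fun n => M * K / (1 + (n : ℝ)) ^ 2 with hb
  have hb0 : ∀ n, 0 ≤ b n := by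
    intro n; have : (0:ℝ) < (1 + (n:ℝ))^2 := by positivity
    exact div_nonneg (by positivity) this.le
  have hbsum : Summable b := by
    have h1 : Summable (fun n : ℕ => 1 / ((n : ℝ) + 1) ^ 2) := by
      have h0 : Summable (fun n : ℕ => 1 / ((n : ℝ)) ^ 2) :=
        Real.summable_one_div_nat_pow.mpr one_lt_two
      exact ((summable_nat_add_iff 1).mpr h0).congr fun n => by push_cast; ring
    refine (h1.mul_left (M * K)).congr fun n => ?_
    simp only [hb]
    ring
  -- finite part
  set F : Finset G := (Finset.range N₀).biUnion Dn with hF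
  set CF : ℝ := ∑ γ ∈ F, c γ with hCF
  have hCF0 : 0 ≤ CF := Finset.sum_nonneg fun γ _ => (hc1 γ).le
  have hT0 : 0 ≤ ∑' n, b n := tsum_nonneg hb0
  refine ⟨CF + (∑' n, b n) + 1, by linarith, fun g => ?_⟩
  have hφg := hφpos g
  -- nonnegativity of the summand
  have hpow_pos : ∀ γ : G, (0:ℝ) < (1 + ℓ γ) ^ t := fun γ =>
    Real.rpow_pos_of_pos (by linarith [hℓpos γ]) t
  have hpow_ge1 : ∀ γ : G, (1:ℝ) ≤ (1 + ℓ γ) ^ t := by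
    intro γ
    have h1 : (1:ℝ) ≤ 1 + ℓ γ := by linarith [hℓpos γ]
    have h2 := Real.rpow_le_rpow_of_exponent_le h1 ht0
    rwa [Real.rpow_zero] at h2
  have hf0 : ∀ γ : G, 0 ≤ φ (g * γ⁻¹) * φ γ / (1 + ℓ γ) ^ t := fun γ =>
    div_nonneg (mul_nonneg (hφpos _).le (hφpos _).le) (hpow_pos γ).le
  -- the per-annulus estimate for large n
  have hannulus : ∀ n : ℕ, N₀ ≤ n →
      ∑ γ ∈ Dn n, φ (g * γ⁻¹) * φ γ / (1 + ℓ γ) ^ t ≤ b n * φ g := by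
    intro n hn
    rcases Finset.eq_empty_or_nonempty (Cn n) with hCe | hCne
    · have : Dn n = ∅ := by
        rw [hDn]; simp [hCe]
      rw [this]
      simpa using mul_nonneg (hb0 n) hφg.le
    have hcpos : (0:ℝ) < ((Cn n).card : ℝ) := by
      exact_mod_cast Finset.card_pos.mpr hCne
    set maxQ : ℝ := max (Q.eval (n : ℝ)) 0 with hmQ
    have hmQ0 : 0 ≤ maxQ := le_max_right _ _
    have h1n : (1:ℝ) ≤ 1 + (n : ℝ) := le_add_of_nonneg_right (Nat.cast_nonneg n)
    have hpn_pos : (0:ℝ) < (1 + (n:ℝ)) ^ t := Real.rpow_pos_of_pos (by linarith) t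
    have hne1 : ((Cn n).card : ℝ) ≠ 0 := hcpos.ne'
    have hne2 : (1 + (n:ℝ)) ^ t ≠ 0 := hpn_pos.ne'
    -- pointwise bound on Dn n
    have hpt : ∀ γ ∈ Dn n, φ (g * γ⁻¹) * φ γ / (1 + ℓ γ) ^ t ≤
        maxQ / ((Cn n).card : ℝ) / (1 + (n:ℝ)) ^ t * (φ (g * γ⁻¹) / φ γ) := by
      intro γ hγ
      rw [hDn, Finset.mem_filter] at hγ
      obtain ⟨hγC, hγfl⟩ := hγ
      have hℓγ : (n : ℝ) ≤ ℓ γ := by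
        rw [← hγfl]; exact Nat.floor_le (hℓpos γ)
      have hden : (1 + (n:ℝ)) ^ t ≤ (1 + ℓ γ) ^ t :=
        Real.rpow_le_rpow (by linarith) (by linarith) ht0
      have step1 : φ (g * γ⁻¹) * φ γ / (1 + ℓ γ) ^ t ≤
          φ (g * γ⁻¹) * φ γ / (1 + (n:ℝ)) ^ t := by
        gcongr
        exact mul_nonneg (hφpos _).le (hφpos _).le
      refine step1.trans ?_
      rw [div_le_iff₀ hpn_pos] at *
      have hnum : φ (g * γ⁻¹) * φ γ ≤
          maxQ / ((Cn n).card : ℝ) / (1 + (n:ℝ)) ^ t * (φ (g * γ⁻¹) / φ γ) * (1 + (n:ℝ)) ^ t := by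
        have hφb : φ γ ≤ maxQ / ((Cn n).card : ℝ) := by
          refine (hQ n hn γ hγC).trans ?_
          gcongr
          exact le_max_left _ _
        have hφa : φ (g * γ⁻¹) ≤ φ (g * γ⁻¹) / φ γ := by
          rw [le_div_iff₀ (hφpos γ)]
          exact mul_le_of_le_one_right (hφpos _).le (hφle γ)
        calc φ (g * γ⁻¹) * φ γ ≤ (φ (g * γ⁻¹) / φ γ) * (maxQ / ((Cn n).card : ℝ)) :=
              mul_le_mul hφa hφb (hφpos γ).le (div_nonneg (hφpos _).le (hφpos _).le)
          _ = maxQ / ((Cn n).card : ℝ) / (1 + (n:ℝ)) ^ t * (φ (g * γ⁻¹) / φ γ) * (1 + (n:ℝ)) ^ t := by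
              have hne3 : φ γ ≠ 0 := (hφpos γ).ne'
              field_simp
      exact hnum
    have hsub : Dn n ⊆ Cn n := Finset.filter_subset _ _
    have hterm0 : ∀ γ : G, 0 ≤
        maxQ / ((Cn n).card : ℝ) / (1 + (n:ℝ)) ^ t * (φ (g * γ⁻¹) / φ γ) := by
      intro γ
      exact mul_nonneg (div_nonneg (div_nonneg hmQ0 hcpos.le) hpn_pos.le)
        (div_nonneg (hφpos _).le (hφpos _).le)
    have hsum1 : ∑ γ ∈ Cn n, φ (g * γ⁻¹) / φ γ ≤ ((Cn n).card : ℝ) * (M * φ g) := by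
      have h := hunif n hn g
      calc ∑ γ ∈ Cn n, φ (g * γ⁻¹) / φ γ
          = ((Cn n).card : ℝ) * (((Cn n).card : ℝ)⁻¹ * ∑ γ ∈ Cn n, φ (g * γ⁻¹) / φ γ) := by
            rw [← mul_assoc, mul_inv_cancel₀ hcpos.ne', one_mul]
        _ ≤ ((Cn n).card : ℝ) * (M * φ g) := by
            exact mul_le_mul_of_nonneg_left h hcpos.le
    calc ∑ γ ∈ Dn n, φ (g * γ⁻¹) * φ γ / (1 + ℓ γ) ^ t
        ≤ ∑ γ ∈ Dn n, maxQ / ((Cn n).card : ℝ) / (1 + (n:ℝ)) ^ t * (φ (g * γ⁻¹) / φ γ) :=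
          Finset.sum_le_sum hpt
      _ ≤ ∑ γ ∈ Cn n, maxQ / ((Cn n).card : ℝ) / (1 + (n:ℝ)) ^ t * (φ (g * γ⁻¹) / φ γ) :=
          Finset.sum_le_sum_of_subset_of_nonneg hsub (fun γ _ _ => hterm0 γ)
      _ = maxQ / ((Cn n).card : ℝ) / (1 + (n:ℝ)) ^ t * ∑ γ ∈ Cn n, φ (g * γ⁻¹) / φ γ := by
          rw [Finset.mul_sum]
      _ ≤ maxQ / ((Cn n).card : ℝ) / (1 + (n:ℝ)) ^ t * (((Cn n).card : ℝ) * (M * φ g)) := by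
          exact mul_le_mul_of_nonneg_left hsum1
            (div_nonneg (div_nonneg hmQ0 hcpos.le) hpn_pos.le)
      _ = maxQ / (1 + (n:ℝ)) ^ t * (M * φ g) := by
          field_simp
      _ ≤ b n * φ g := by
          have hQb : maxQ ≤ K * (1 + (n:ℝ)) ^ d := by
            have habs : |Q.eval (n:ℝ)| ≤ K * (1 + (n:ℝ)) ^ d := by
              rw [Polynomial.eval_eq_sum_range]
              refine (Finset.abs_sum_le_sum_abs _ _).trans ?_
              rw [hKdef, Finset.sum_mul]
              refine Finset.sum_le_sum fun i hi => ?_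
              rw [abs_mul, abs_pow, Nat.abs_cast]
              refine mul_le_mul_of_nonneg_left ?_ (abs_nonneg _)
              calc (n:ℝ) ^ i ≤ (1 + (n:ℝ)) ^ i :=
                    pow_le_pow_left₀ (Nat.cast_nonneg n) (by linarith) i
                _ ≤ (1 + (n:ℝ)) ^ d := by
                    refine pow_le_pow_right₀ h1n ?_
                    exact Nat.lt_succ_iff.mp (Finset.mem_range.mp hi)
            exact max_le (le_trans (le_abs_self _) habs) (mul_nonneg hK0 (by positivity))
          have hexp : (1 + (n:ℝ)) ^ ((d + 2 : ℕ) : ℝ) ≤ (1 + (n:ℝ)) ^ t := by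
            refine Real.rpow_le_rpow_of_exponent_le h1n ?_
            push_cast; linarith
          rw [Real.rpow_natCast] at hexp
          have hnat_pos : (0:ℝ) < (1 + (n:ℝ)) ^ (d + 2 : ℕ) := by positivity
          have hdiv : maxQ / (1 + (n:ℝ)) ^ t ≤
              K * (1 + (n:ℝ)) ^ d / (1 + (n:ℝ)) ^ (d + 2 : ℕ) :=
            div_le_div₀ (mul_nonneg hK0 (by positivity)) hQb hnat_pos hexp
          have heq : K * (1 + (n:ℝ)) ^ d / (1 + (n:ℝ)) ^ (d + 2 : ℕ) = K / (1 + (n:ℝ)) ^ 2 := by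
            rw [pow_add]
            field_simp
          rw [heq] at hdiv
          calc maxQ / (1 + (n:ℝ)) ^ t * (M * φ g) ≤ K / (1 + (n:ℝ)) ^ 2 * (M * φ g) := by
                exact mul_le_mul_of_nonneg_right hdiv (mul_nonneg hM.le hφg.le)
            _ = b n * φ g := by rw [hb]; ring
  -- the global finite-sum bound
  have key : ∀ u : Finset G, ∑ γ ∈ u, φ (g * γ⁻¹) * φ γ / (1 + ℓ γ) ^ t ≤
      (CF + (∑' n, b n) + 1) * φ g := by
    intro u
    set N : ℕ := (u.sup fun γ => ⌊ℓ γ⌋₊) + 1 with hN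
    have hsubu : u ⊆ (Finset.range N).biUnion Dn := by
      intro γ hγ
      refine Finset.mem_biUnion.mpr ⟨⌊ℓ γ⌋₊, ?_, hmemD γ⟩
      rw [Finset.mem_range, hN]
      exact Nat.lt_succ_of_le (Finset.le_sup (f := fun γ => ⌊ℓ γ⌋₊) hγ)
    have hdisjD : ∀ m n : ℕ, m ≠ n → Disjoint (Dn m) (Dn n) := by
      intro m n hmn
      rw [Finset.disjoint_left]
      intro γ hγm hγn
      rw [hDn] at hγm hγn
      simp only [Finset.mem_filter] at hγm hγn
      exact hmn (hγm.2.symm.trans hγn.2)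
    have hdisj : (↑(Finset.range N) : Set ℕ).PairwiseDisjoint Dn :=
      fun m _ n _ hmn => hdisjD m n hmn
    have h1 : ∑ γ ∈ u, φ (g * γ⁻¹) * φ γ / (1 + ℓ γ) ^ t ≤
        ∑ n ∈ Finset.range N, ∑ γ ∈ Dn n, φ (g * γ⁻¹) * φ γ / (1 + ℓ γ) ^ t := by
      rw [← Finset.sum_biUnion hdisj]
      exact Finset.sum_le_sum_of_subset_of_nonneg hsubu (fun γ _ _ => hf0 γ)
    refine h1.trans ?_
    rw [← Finset.sum_filter_add_sum_filter_not (Finset.range N) (· < N₀)]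
    have hA : ∑ n ∈ (Finset.range N).filter (· < N₀),
        ∑ γ ∈ Dn n, φ (g * γ⁻¹) * φ γ / (1 + ℓ γ) ^ t ≤ CF * φ g := by
      have hdisj' : (↑((Finset.range N).filter (· < N₀)) : Set ℕ).PairwiseDisjoint Dn :=
        fun m _ n _ hmn => hdisjD m n hmn
      rw [← Finset.sum_biUnion hdisj']
      have hsubF : ((Finset.range N).filter (· < N₀)).biUnion Dn ⊆ F := by
        rw [hF]
        refine Finset.biUnion_subset_biUnion_of_subset_left _ ?_
        intro n hn
        rw [Finset.mem_range]
        exact (Finset.mem_filter.mp hn).2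
      calc ∑ γ ∈ ((Finset.range N).filter (· < N₀)).biUnion Dn,
            φ (g * γ⁻¹) * φ γ / (1 + ℓ γ) ^ t
          ≤ ∑ γ ∈ ((Finset.range N).filter (· < N₀)).biUnion Dn, c γ * φ g := by
            refine Finset.sum_le_sum fun γ _ => ?_
            calc φ (g * γ⁻¹) * φ γ / (1 + ℓ γ) ^ t ≤ φ (g * γ⁻¹) * φ γ :=
                  div_le_self (mul_nonneg (hφpos _).le (hφpos _).le) (hpow_ge1 γ)
              _ ≤ φ (g * γ⁻¹) := mul_le_of_le_one_right (hφpos _).le (hφle γ)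
              _ ≤ c γ * φ g := hc2 γ g
        _ ≤ ∑ γ ∈ F, c γ * φ g :=
            Finset.sum_le_sum_of_subset_of_nonneg hsubF
              (fun γ _ _ => mul_nonneg (hc1 γ).le hφg.le)
        _ = CF * φ g := by rw [hCF, Finset.sum_mul]
    have hB : ∑ n ∈ (Finset.range N).filter (fun n => ¬ n < N₀),
        ∑ γ ∈ Dn n, φ (g * γ⁻¹) * φ γ / (1 + ℓ γ) ^ t ≤ (∑' n, b n) * φ g := by
      calc ∑ n ∈ (Finset.range N).filter (fun n => ¬ n < N₀),
            ∑ γ ∈ Dn n, φ (g * γ⁻¹) * φ γ / (1 + ℓ γ) ^ t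
          ≤ ∑ n ∈ (Finset.range N).filter (fun n => ¬ n < N₀), b n * φ g := by
            refine Finset.sum_le_sum fun n hn => ?_
            exact hannulus n (not_lt.mp (Finset.mem_filter.mp hn).2)
        _ = (∑ n ∈ (Finset.range N).filter (fun n => ¬ n < N₀), b n) * φ g := by
            rw [Finset.sum_mul]
        _ ≤ (∑' n, b n) * φ g := by
            refine mul_le_mul_of_nonneg_right ?_ hφg.le
            exact hbsum.sum_le_tsum _ (fun n _ => hb0 n)
    have : (0:ℝ) ≤ 1 * φ g := by linarith
    calc _ ≤ CF * φ g + (∑' n, b n) * φ g := add_le_add hA hB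
      _ ≤ (CF + (∑' n, b n) + 1) * φ g := by nlinarith
  have hsummable : Summable (fun γ : G => φ (g * γ⁻¹) * φ γ / (1 + ℓ γ) ^ t) :=
    summable_of_sum_le hf0 key
  exact ⟨hsummable, Summable.tsum_le_of_sum_le hsummable key⟩
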